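/- Let m ≥ 1 and let α : Fin m → ℕ be nonincreasing (i ≤ j → α j ≤ α i) with α (m−1) = 0. Let p ∈ Fin m. Let V₀ and V₁ be finite types of voters with weights ω on V₀ ⊕ V₁, let σ be a profile of rankings on V₀ ⊕ V₁ such that every voter v ∈ V₁ ranks p last (σ_v p = m−1), and suppose ω v₁ ≥ 2 · ω v₀ for every v₁ ∈ V₁ and every v₀ ∈ V₀. If there exists a profile τ on V₀ ⊕ V₁ with card {v | τ v ≠ σ v} ≤ card V₁ under which p is a winner, then there exists a profile τ' with τ' v = σ v for every v ∈ V₀ under which p is a winner. -/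
import Mathlib

/-- If `s.card ≤ t.card` and every value of `f` on `s` is at most every value of `g`
on `t`, then the sum of `f` over `s` is at most the sum of `g` over `t`. -/
lemma aux_sum_le_sum_of_card_le {ι κ : Type*} (s : Finset ι) (t : Finset κ)
    (f : ι → ℕ) (g : κ → ℕ) (hst : s.card ≤ t.card)
    (h : ∀ x ∈ s, ∀ y ∈ t, f x ≤ g y) :
    ∑ x ∈ s, f x ≤ ∑ y ∈ t, g y := by
  classical
  rcases s.eq_empty_or_nonempty with rfl | hs
  · simp
  have ht : t.Nonempty := Finset.card_pos.mp (lt_of_lt_of_le (Finset.card_pos.mpr hs) hst)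
  have himg : (t.image g).Nonempty := ht.image g
  obtain ⟨y₀, hy₀, hgy₀⟩ := Finset.mem_image.mp ((t.image g).min'_mem himg)
  calc ∑ x ∈ s, f x ≤ ∑ _x ∈ s, (t.image g).min' himg :=
        Finset.sum_le_sum fun x hx => hgy₀ ▸ h x hx y₀ hy₀
    _ = s.card * (t.image g).min' himg := by rw [Finset.sum_const, smul_eq_mul]
    _ ≤ t.card * (t.image g).min' himg := Nat.mul_le_mul_right _ hst
    _ = ∑ _y ∈ t, (t.image g).min' himg := by rw [Finset.sum_const, smul_eq_mul]
    _ ≤ ∑ y ∈ t, g y :=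
        Finset.sum_le_sum fun y hy => Finset.min'_le _ _ (Finset.mem_image_of_mem g hy)

/-- Key claim of the reduction from restricted weighted manipulation to weighted
bribery for scoring protocols: if the voters in `V₁` all rank `p` last and each is at
least twice as heavy as every voter in `V₀`, and some bribery of at most `‖V₁‖` voters
makes `p` a winner, then some bribery touching only the voters in `V₁` does. -/
theorem scoring_bribery_heavy_voters_suffice
    (m : ℕ) (hm : 1 ≤ m) (α : Fin m → ℕ)
    (hα : ∀ i j : Fin m, i ≤ j → α j ≤ α i)
    (hlast : α ⟨m - 1, Nat.sub_lt hm Nat.one_pos⟩ = 0)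
    (p : Fin m) {V₀ V₁ : Type*} [Fintype V₀] [Fintype V₁]
    (ω : V₀ ⊕ V₁ → ℕ) (σ : V₀ ⊕ V₁ → (Fin m ≃ Fin m))
    (hσ : ∀ v : V₁, σ (Sum.inr v) p = ⟨m - 1, Nat.sub_lt hm Nat.one_pos⟩)
    (hω : ∀ (v₁ : V₁) (v₀ : V₀), 2 * ω (Sum.inl v₀) ≤ ω (Sum.inr v₁))
    (hex : ∃ τ : V₀ ⊕ V₁ → (Fin m ≃ Fin m),
        {v | τ v ≠ σ v}.ncard ≤ Fintype.card V₁ ∧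
        ∀ c : Fin m, (∑ v, ω v * α (τ v c)) ≤ ∑ v, ω v * α (τ v p)) :
    ∃ τ' : V₀ ⊕ V₁ → (Fin m ≃ Fin m),
      (∀ v : V₀, τ' (Sum.inl v) = σ (Sum.inl v)) ∧
      ∀ c : Fin m, (∑ v, ω v * α (τ' v c)) ≤ ∑ v, ω v * α (τ' v p) := by
  classical
  obtain ⟨n, rfl⟩ : ∃ n, m = n + 1 := ⟨m - 1, (Nat.succ_pred_eq_of_pos hm).symm⟩
  obtain ⟨τ, hcard, hwin⟩ := hex
  have hmax : ∀ i, α i ≤ α 0 := fun i => hα 0 i (Fin.zero_le i)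
  have hL : (⟨n + 1 - 1, Nat.sub_lt hm Nat.one_pos⟩ : Fin (n + 1)) = Fin.last n := rfl
  have hσ0 : ∀ v : V₁, α (σ (Sum.inr v) p) = 0 := fun v => by rw [hσ v]; exact hlast
  have hrot0 : ∀ v : V₁, finRotate (n + 1) (σ (Sum.inr v) p) = 0 := fun v => by
    rw [hσ v, hL, finRotate_succ_apply, Fin.last_add_one]
  -- the new bribery: keep σ on V₀, keep τ on bribed V₁ voters, rotate σ on the rest
  set τ' : V₀ ⊕ V₁ → (Fin (n + 1) ≃ Fin (n + 1)) :=
    Sum.elim (fun u => σ (Sum.inl u))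
      (fun v => if τ (Sum.inr v) = σ (Sum.inr v)
        then (σ (Sum.inr v)).trans (finRotate (n + 1)) else τ (Sum.inr v)) with hτ'
  have hτ'l : ∀ u, τ' (Sum.inl u) = σ (Sum.inl u) := fun u => rfl
  have hτ'rB : ∀ v, τ (Sum.inr v) ≠ σ (Sum.inr v) → τ' (Sum.inr v) = τ (Sum.inr v) :=
    fun v h => by simp only [hτ', Sum.elim_inr, if_neg h]
  have hτ'rC : ∀ v, τ (Sum.inr v) = σ (Sum.inr v) →
      τ' (Sum.inr v) = (σ (Sum.inr v)).trans (finRotate (n + 1)) :=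
    fun v h => by simp only [hτ', Sum.elim_inr, if_pos h]
  refine ⟨τ', fun u => rfl, ?_⟩
  intro c
  rcases eq_or_ne c p with rfl | hcp
  · exact le_rfl
  -- rotating an unbribed heavy vote does not increase c's score
  have hrotc : ∀ v : V₁, α (finRotate (n + 1) (σ (Sum.inr v) c)) ≤ α (σ (Sum.inr v) c) := by
    intro v
    have hne : σ (Sum.inr v) c ≠ Fin.last n := by
      rw [← hL, ← hσ v]
      exact fun h => hcp ((σ (Sum.inr v)).injective h)
    have hlt : σ (Sum.inr v) c < Fin.last n := lt_of_le_of_ne (Fin.le_last _) hne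
    rw [finRotate_succ_apply]
    refine hα _ _ ?_
    rw [Fin.le_def, Fin.val_add_one_of_lt hlt]
    omega
  -- the four parts of the electorate
  set B₀ : Finset V₀ := Finset.univ.filter (fun u => τ (Sum.inl u) ≠ σ (Sum.inl u)) with hB₀
  set C₀ : Finset V₀ := Finset.univ.filter (fun u => ¬ τ (Sum.inl u) ≠ σ (Sum.inl u)) with hC₀
  set B₁ : Finset V₁ := Finset.univ.filter (fun v => τ (Sum.inr v) ≠ σ (Sum.inr v)) with hB₁
  set C₁ : Finset V₁ := Finset.univ.filter (fun v => ¬ τ (Sum.inr v) ≠ σ (Sum.inr v)) with hC₁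
  have split : ∀ f : V₀ ⊕ V₁ → ℕ, ∑ v, f v =
      ((∑ u ∈ B₀, f (Sum.inl u)) + (∑ u ∈ C₀, f (Sum.inl u))) +
      ((∑ v ∈ B₁, f (Sum.inr v)) + (∑ v ∈ C₁, f (Sum.inr v))) := by
    intro f
    rw [Fintype.sum_sum_type, hB₀, hC₀, hB₁, hC₁,
      Finset.sum_filter_add_sum_filter_not Finset.univ
        (fun u => τ (Sum.inl u) ≠ σ (Sum.inl u)) (fun u => f (Sum.inl u)),
      Finset.sum_filter_add_sum_filter_not Finset.univ
        (fun v => τ (Sum.inr v) ≠ σ (Sum.inr v)) (fun v => f (Sum.inr v))]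
  -- cardinality bookkeeping
  have cardle : B₀.card ≤ C₁.card := by
    have hset : {v | τ v ≠ σ v} = ↑(Finset.univ.filter fun v => τ v ≠ σ v) := by
      ext v; simp
    have hc1 : (Finset.univ.filter fun v : V₀ ⊕ V₁ => τ v ≠ σ v).card
        = B₀.card + B₁.card := by
      rw [hB₀, hB₁, Finset.card_filter, Finset.card_filter, Finset.card_filter,
        Fintype.sum_sum_type]
    have hc2 : B₁.card + C₁.card = Fintype.card V₁ := by
      rw [hB₁, hC₁, Finset.card_filter_add_card_filter_not, Finset.card_univ]
    rw [hset, Set.ncard_coe_finset, hc1] at hcard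
    omega
  -- the weight transfer inequality
  have hW : (∑ u ∈ B₀, 2 * ω (Sum.inl u)) ≤ ∑ v ∈ C₁, ω (Sum.inr v) :=
    aux_sum_le_sum_of_card_le _ _ _ _ cardle (fun u _ v _ => hω v u)
  -- main combined inequality
  have main : ∑ v, (ω v * α (τ' v c) + ω v * α (τ v p))
      ≤ ∑ v, (ω v * α (τ' v p) + ω v * α (τ v c)) := by
    rw [split, split]
    have eC₀ : ∑ u ∈ C₀, (ω (Sum.inl u) * α (τ' (Sum.inl u) c) + ω (Sum.inl u) * α (τ (Sum.inl u) p))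
        = ∑ u ∈ C₀, (ω (Sum.inl u) * α (τ' (Sum.inl u) p) + ω (Sum.inl u) * α (τ (Sum.inl u) c)) := by
      refine Finset.sum_congr rfl fun u hu => ?_
      rw [hC₀, Finset.mem_filter] at hu
      have h := not_not.mp hu.2
      rw [hτ'l, h, Nat.add_comm]
    have eB₁ : ∑ v ∈ B₁, (ω (Sum.inr v) * α (τ' (Sum.inr v) c) + ω (Sum.inr v) * α (τ (Sum.inr v) p))
        = ∑ v ∈ B₁, (ω (Sum.inr v) * α (τ' (Sum.inr v) p) + ω (Sum.inr v) * α (τ (Sum.inr v) c)) := by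
      refine Finset.sum_congr rfl fun v hv => ?_
      rw [hB₁, Finset.mem_filter] at hv
      rw [hτ'rB v hv.2, Nat.add_comm]
    have k1 : ∑ u ∈ B₀, (ω (Sum.inl u) * α (τ' (Sum.inl u) c) + ω (Sum.inl u) * α (τ (Sum.inl u) p))
        ≤ (∑ u ∈ B₀, 2 * ω (Sum.inl u)) * α 0 := by
      rw [Finset.sum_mul]
      refine Finset.sum_le_sum fun u _ => ?_
      rw [hτ'l]
      calc ω (Sum.inl u) * α (σ (Sum.inl u) c) + ω (Sum.inl u) * α (τ (Sum.inl u) p)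
          ≤ ω (Sum.inl u) * α 0 + ω (Sum.inl u) * α 0 :=
            Nat.add_le_add (Nat.mul_le_mul_left _ (hmax _)) (Nat.mul_le_mul_left _ (hmax _))
        _ = 2 * ω (Sum.inl u) * α 0 := by ring
    have k2 : ∑ v ∈ C₁, (ω (Sum.inr v) * α (τ' (Sum.inr v) c) + ω (Sum.inr v) * α (τ (Sum.inr v) p))
        ≤ ∑ v ∈ C₁, ω (Sum.inr v) * α (σ (Sum.inr v) c) := by
      refine Finset.sum_le_sum fun v hv => ?_
      rw [hC₁, Finset.mem_filter] at hv
      have h := not_not.mp hv.2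
      rw [hτ'rC v h, h, hσ0 v, Nat.mul_zero, Nat.add_zero, Equiv.trans_apply]
      exact Nat.mul_le_mul_left _ (hrotc v)
    have k3 : ∑ v ∈ C₁, (ω (Sum.inr v) * α (τ' (Sum.inr v) p) + ω (Sum.inr v) * α (τ (Sum.inr v) c))
        = (∑ v ∈ C₁, ω (Sum.inr v)) * α 0 + ∑ v ∈ C₁, ω (Sum.inr v) * α (σ (Sum.inr v) c) := by
      rw [Finset.sum_mul, ← Finset.sum_add_distrib]
      refine Finset.sum_congr rfl fun v hv => ?_
      rw [hC₁, Finset.mem_filter] at hv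
      have h := not_not.mp hv.2
      rw [hτ'rC v h, h, Equiv.trans_apply, hrot0 v]
    have k4 : (∑ u ∈ B₀, 2 * ω (Sum.inl u)) * α 0 ≤ (∑ v ∈ C₁, ω (Sum.inr v)) * α 0 :=
      Nat.mul_le_mul_right _ hW
    omega
  rw [Finset.sum_add_distrib, Finset.sum_add_distrib] at main
  have h1 := hwin c
  omega
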